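/- (Nonergodic convergence of FDRS.) Let γ ∈ (0, 2β_V) and (λ_k)_{k≥0} ⊆ (0, 1/α), and suppose τ̲ := inf_{j≥0} (1 − αλ_j)λ_j/α > 0. Let p ∈ ∂f(x*) and q ∈ V⊥ satisfy p + ∇h(x*) + q = 0 (such p, q exist). Then for all k ≥ 0: (i) ‖x_f^k − x_h^k‖ ≤ ‖z⁰ − z*‖/√(τ̲(k+1)), and ‖x_f^k − x_h^k‖ = o(1/√(k+1)); (ii) −‖z⁰ − z*‖·‖p‖/√(τ̲(k+1)) ≤ f(x_f^k) + h(x_h^k) − f(x*) − h(x*) ≤ (‖z* − x*‖ + (1 + γ/β_V)‖z⁰ − z*‖ + γ‖∇h(x*)‖)‖z⁰ − z*‖ / (γ√(τ̲(k+1))); and (iii) |f(x_f^k) + h(x_h^k) − f(x*) − h(x*)| = o(1/√(k+1)). -/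

import Mathlib

open scoped RealInnerProductSpace
open Filter Asymptotics Topology

section aux
variable {H : Type*} [NormedAddCommGroup H] [InnerProductSpace ℝ H] [CompleteSpace H]

/-- derivative along a line -/
lemma line_hasDerivAt (φ : H → ℝ) (G : H → H) (hdiff : ∀ x, HasGradientAt φ (G x) x)
    (x d : H) (t : ℝ) :
    HasDerivAt (fun s : ℝ => φ (x + s • d)) ⟪G (x + t • d), d⟫ t := by
  have hline : HasDerivAt (fun s : ℝ => x + s • d) d t := by
    simpa using ((hasDerivAt_id t).smul_const d).const_add x
  have := ((hdiff (x + t • d)).hasFDerivAt).comp_hasDerivAt t hline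
  simpa [InnerProductSpace.toDual_apply_apply, Function.comp_def] using this

end aux
section aux2
variable {H : Type*} [NormedAddCommGroup H] [InnerProductSpace ℝ H] [CompleteSpace H]

lemma conv_grad_ineq (φ : H → ℝ) (G : H → H) (hconv : ConvexOn ℝ Set.univ φ)
    (hdiff : ∀ x, HasGradientAt φ (G x) x) (x y : H) :
    φ x + ⟪G x, y - x⟫ ≤ φ y := by
  set d := y - x with hd
  have hder : HasDerivAt (fun s : ℝ => φ (x + s • d)) ⟪G x, d⟫ 0 := by
    simpa using line_hasDerivAt φ G hdiff x d 0
  have hslope := hasDerivAt_iff_tendsto_slope.1 hder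
  have hslope' : Tendsto (slope (fun s : ℝ => φ (x + s • d)) 0) (𝓝[>] (0:ℝ)) (𝓝 ⟪G x, d⟫) :=
    hslope.mono_left (nhdsWithin_mono _ (fun s hs => ne_of_gt hs))
  have hev : ∀ᶠ s in 𝓝[>] (0:ℝ), slope (fun s : ℝ => φ (x + s • d)) 0 s ≤ φ y - φ x := by
    filter_upwards [Ioo_mem_nhdsGT_of_mem (Set.mem_Ico.2 ⟨le_refl (0:ℝ), one_pos⟩)] with s hs
    obtain ⟨hs0, hs1⟩ := hs
    have hcvx := hconv.2 (Set.mem_univ x) (Set.mem_univ y)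
      (show (0:ℝ) ≤ 1 - s by linarith) hs0.le (by ring : (1 - s) + s = 1)
    have hxy : (1 - s) • x + s • y = x + s • d := by
      rw [hd]; module
    rw [hxy] at hcvx
    simp only [smul_eq_mul] at hcvx
    have : (φ (x + s • d) - φ (x + (0:ℝ) • d)) / (s - 0) ≤ φ y - φ x := by
      rw [div_le_iff₀ (by linarith)]
      simp only [zero_smul, add_zero]
      nlinarith [hcvx]
    simpa [slope_def_field] using this
  have := le_of_tendsto hslope' hev
  linarith
end aux2
section aux3
variable {H : Type*} [NormedAddCommGroup H] [InnerProductSpace ℝ H] [CompleteSpace H]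

lemma descent_lemma (φ : H → ℝ) (G : H → H) (hdiff : ∀ x, HasGradientAt φ (G x) x)
    (L : ℝ) (hL : 0 ≤ L) (hlip : ∀ a b, ‖G a - G b‖ ≤ L * ‖a - b‖) (x y : H) :
    φ y ≤ φ x + ⟪G x, y - x⟫ + L / 2 * ‖y - x‖ ^ 2 := by
  set d := y - x with hd
  set χ : ℝ → ℝ := fun t => φ (x + t • d) - t * ⟪G x, d⟫ - L * t ^ 2 / 2 * ‖d‖ ^ 2 with hχ
  have hder : ∀ t : ℝ, HasDerivAt χ (⟪G (x + t • d), d⟫ - ⟪G x, d⟫ - L * t * ‖d‖ ^ 2) t := by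
    intro t
    have h1 := line_hasDerivAt φ G hdiff x d t
    have h2 : HasDerivAt (fun t : ℝ => t * ⟪G x, d⟫) ⟪G x, d⟫ t := by
      simpa using (hasDerivAt_id t).mul_const ⟪G x, d⟫
    have h3 : HasDerivAt (fun t : ℝ => L * t ^ 2 / 2 * ‖d‖ ^ 2) (L * t * ‖d‖ ^ 2) t := by
      have : HasDerivAt (fun t : ℝ => t ^ 2) (2 * t) t := by
        simpa using hasDerivAt_pow 2 t
      have := (((this.const_mul L).div_const 2).mul_const (‖d‖ ^ 2))
      exact this.congr_deriv (by ring)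
    exact (h1.sub h2).sub h3
  have hanti : AntitoneOn χ (Set.Icc 0 1) := by
    apply antitoneOn_of_deriv_nonpos (convex_Icc 0 1)
    · exact fun t _ => ((hder t).continuousAt).continuousWithinAt
    · exact fun t _ => ((hder t).differentiableAt).differentiableWithinAt
    · intro t ht
      rw [interior_Icc] at ht
      rw [(hder t).deriv]
      have hcs : ⟪G (x + t • d) - G x, d⟫ ≤ ‖G (x + t • d) - G x‖ * ‖d‖ :=
        real_inner_le_norm _ _
      have hlb : ‖G (x + t • d) - G x‖ ≤ L * (t * ‖d‖) := by
        have := hlip (x + t • d) x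
        simpa [norm_smul, abs_of_pos ht.1, mul_assoc] using this
      have : ⟪G (x + t • d), d⟫ - ⟪G x, d⟫ ≤ L * t * ‖d‖ ^ 2 := by
        rw [inner_sub_left] at hcs
        calc ⟪G (x + t • d), d⟫ - ⟪G x, d⟫ ≤ ‖G (x + t • d) - G x‖ * ‖d‖ := hcs
        _ ≤ L * (t * ‖d‖) * ‖d‖ := by
              apply mul_le_mul_of_nonneg_right hlb (norm_nonneg d)
        _ = L * t * ‖d‖ ^ 2 := by ring
      linarith
  have h01 := hanti (Set.mem_Icc.2 ⟨le_refl (0:ℝ), zero_le_one⟩)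
    (Set.mem_Icc.2 ⟨zero_le_one, le_refl (1:ℝ)⟩) zero_le_one
  simp only [hχ, zero_smul, add_zero, one_smul, zero_mul, zero_pow, mul_zero, sub_zero,
    one_mul, one_pow, mul_one, zero_div, sub_zero] at h01
  have hxy : x + d = y := by rw [hd]; abel
  rw [hxy] at h01
  linarith [h01]
end aux3
section aux4
variable {H : Type*} [NormedAddCommGroup H] [InnerProductSpace ℝ H] [CompleteSpace H]

lemma grad_sub_inner (φ : H → ℝ) (G : H → H) (hdiff : ∀ x, HasGradientAt φ (G x) x) (a : H) :
    ∀ z, HasGradientAt (fun w => φ w - ⟪a, w⟫) (G z - a) z := by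
  intro z
  have h1 : HasFDerivAt (fun w => φ w - ⟪a, w⟫)
      ((InnerProductSpace.toDual ℝ H (G z)) - (innerSL ℝ a)) z :=
    (hdiff z).hasFDerivAt.sub ((innerSL ℝ a).hasFDerivAt)
  have h2 : ((InnerProductSpace.toDual ℝ H (G z)) - (innerSL ℝ a))
      = InnerProductSpace.toDual ℝ H (G z - a) := by
    ext v
    simp [inner_sub_left]
  rw [h2] at h1
  simpa using h1.hasGradientAt

lemma baillon_haddad_aux (φ : H → ℝ) (G : H → H) (hconv : ConvexOn ℝ Set.univ φ)
    (hdiff : ∀ x, HasGradientAt φ (G x) x)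
    (L : ℝ) (hL : 0 < L) (hlip : ∀ a b, ‖G a - G b‖ ≤ L * ‖a - b‖) (x y : H) :
    φ x + ⟪G x, y - x⟫ + 1 / (2 * L) * ‖G y - G x‖ ^ 2 ≤ φ y := by
  set ψ : H → ℝ := fun w => φ w - ⟪G x, w⟫ with hψ
  set Gψ : H → H := fun w => G w - G x with hGψ
  have hψdiff : ∀ z, HasGradientAt ψ (Gψ z) z := grad_sub_inner φ G hdiff (G x)
  have hψconv : ConvexOn ℝ Set.univ ψ := by
    refine ⟨convex_univ, fun u _ v _ a b ha hb hab => ?_⟩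
    have h0 := hconv.2 (Set.mem_univ u) (Set.mem_univ v) ha hb hab
    simp only [smul_eq_mul] at h0
    simp only [hψ, smul_eq_mul, inner_add_right, inner_smul_right]
    nlinarith [h0]
  have hψlip : ∀ a b, ‖Gψ a - Gψ b‖ ≤ L * ‖a - b‖ := by
    intro a b; simpa [hGψ, sub_sub_sub_cancel_right] using hlip a b
  -- ψ is minimized at x since Gψ x = 0
  have hmin : ∀ w, ψ x ≤ ψ w := by
    intro w
    have := conv_grad_ineq ψ Gψ hψconv hψdiff x w
    simpa [hGψ] using this
  -- descent step from y
  have hdesc := descent_lemma ψ Gψ hψdiff L hL.le hψlip y (y - (1 / L) • (G y - G x))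
  have hmin' := hmin (y - (1 / L) • (G y - G x))
  have hGψy : Gψ y = G y - G x := rfl
  rw [hGψy] at hdesc
  have hv1 : (y - (1 / L) • (G y - G x)) - y = -((1 / L) • (G y - G x)) := by abel
  rw [hv1] at hdesc
  have hinner : ⟪G y - G x, -((1 / L) • (G y - G x))⟫ = -(1 / L) * ‖G y - G x‖ ^ 2 := by
    rw [inner_neg_right, real_inner_smul_right, real_inner_self_eq_norm_sq]; ring
  have hnorm : ‖-((1 / L) • (G y - G x))‖ ^ 2 = (1 / L) ^ 2 * ‖G y - G x‖ ^ 2 := by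
    rw [norm_neg, norm_smul]
    simp [abs_of_pos (by positivity : (0:ℝ) < 1 / L), mul_pow]
  rw [hinner, hnorm] at hdesc
  have key : ψ x ≤ ψ y - 1 / (2 * L) * ‖G y - G x‖ ^ 2 := by
    have hLL : L / 2 * ((1 / L) ^ 2 * ‖G y - G x‖ ^ 2) = 1 / (2 * L) * ‖G y - G x‖ ^ 2 := by
      field_simp
    calc ψ x ≤ ψ (y - (1 / L) • (G y - G x)) := hmin'
    _ ≤ ψ y + (-(1 / L) * ‖G y - G x‖ ^ 2) + L / 2 * ((1 / L) ^ 2 * ‖G y - G x‖ ^ 2) := hdesc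
    _ = ψ y - 1 / (2 * L) * ‖G y - G x‖ ^ 2 := by rw [hLL]; field_simp; ring
  simp only [hψ] at key
  have : ⟪G x, y⟫ - ⟪G x, x⟫ = ⟪G x, y - x⟫ := by rw [inner_sub_right]
  linarith [key, this.symm.le, this.le]

lemma cocoercive_of_convex_lip (φ : H → ℝ) (G : H → H) (hconv : ConvexOn ℝ Set.univ φ)
    (hdiff : ∀ x, HasGradientAt φ (G x) x)
    (L : ℝ) (hL : 0 < L) (hlip : ∀ a b, ‖G a - G b‖ ≤ L * ‖a - b‖) (x y : H) :
    1 / L * ‖G x - G y‖ ^ 2 ≤ ⟪G x - G y, x - y⟫ := by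
  have h1 := baillon_haddad_aux φ G hconv hdiff L hL hlip x y
  have h2 := baillon_haddad_aux φ G hconv hdiff L hL hlip y x
  have e1 : ⟪G x, y - x⟫ + ⟪G y, x - y⟫ = -⟪G x - G y, x - y⟫ := by
    rw [inner_sub_left]
    have : (y : H) - x = -(x - y) := by abel
    rw [this, inner_neg_right]
    ring
  have e2 : ‖G y - G x‖ = ‖G x - G y‖ := by rw [← norm_neg]; congr 1; abel
  rw [e2] at h1
  have hcl : 1 / (2 * L) + 1 / (2 * L) = 1 / L := by
    rw [← add_div]; rw [show (1:ℝ) + 1 = 2 by norm_num]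
    rw [div_eq_div_iff (by positivity) (by positivity)]; ring
  have hcl2 : 1 / (2 * L) * ‖G x - G y‖ ^ 2 + 1 / (2 * L) * ‖G x - G y‖ ^ 2
      = 1 / L * ‖G x - G y‖ ^ 2 := by rw [← add_mul, hcl]
  linarith [h1, h2, e1]
end aux4
section aux5
variable {H : Type*} [NormedAddCommGroup H] [InnerProductSpace ℝ H]

lemma prox_subgrad (f : H → ℝ) (hfconv : ConvexOn ℝ Set.univ f) (γ : ℝ) (hγ : 0 < γ)
    (proxf : H → H)
    (hprox : ∀ x, IsMinOn (fun y => f y + (1 / (2 * γ)) * ‖y - x‖ ^ 2) Set.univ (proxf x))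
    (x y : H) :
    ⟪y - proxf x, x - proxf x⟫ ≤ γ * (f y - f (proxf x)) := by
  set P := proxf x with hP
  -- for all t ∈ (0,1], key inequality
  have key : ∀ t : ℝ, 0 < t → t ≤ 1 →
      ⟪y - P, x - P⟫ ≤ γ * (f y - f P) + t / 2 * ‖y - P‖ ^ 2 := by
    intro t ht0 ht1
    have hmin := (hprox x) (Set.mem_univ (P + t • (y - P)))
    simp only [Set.mem_setOf_eq] at hmin
    have hcvx : f (P + t • (y - P)) ≤ (1 - t) * f P + t * f y := by
      have := hfconv.2 (Set.mem_univ P) (Set.mem_univ y)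
        (show (0:ℝ) ≤ 1 - t by linarith) ht0.le (by ring : (1 - t) + t = 1)
      simp only [smul_eq_mul] at this
      have heq : (1 - t) • P + t • y = P + t • (y - P) := by module
      rw [heq] at this
      exact this
    have hnorm : ‖P + t • (y - P) - x‖ ^ 2
        = ‖P - x‖ ^ 2 + 2 * t * ⟪P - x, y - P⟫ + t ^ 2 * ‖y - P‖ ^ 2 := by
      have : P + t • (y - P) - x = (P - x) + t • (y - P) := by abel
      rw [this, norm_add_sq_real, real_inner_smul_right, norm_smul]
      rw [Real.norm_eq_abs, abs_of_pos ht0]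
      ring
    have h2γ : (0:ℝ) < 1 / (2 * γ) := by positivity
    -- hmin : f P + 1/(2γ)‖P − x‖² ≤ f (P + t(y−P)) + 1/(2γ)‖P + t(y−P) − x‖²
    have hge : 0 ≤ t * (f y - f P) + 1 / (2 * γ) * (2 * t * ⟪P - x, y - P⟫ + t ^ 2 * ‖y - P‖ ^ 2) := by
      have := hmin
      rw [hnorm] at this
      nlinarith [this, hcvx]
    -- divide by t
    have hdiv : 0 ≤ (f y - f P) + 1 / (2 * γ) * (2 * ⟪P - x, y - P⟫ + t * ‖y - P‖ ^ 2) := by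
      have hfact : t * ((f y - f P) + 1 / (2 * γ) * (2 * ⟪P - x, y - P⟫ + t * ‖y - P‖ ^ 2))
          = t * (f y - f P) + 1 / (2 * γ) * (2 * t * ⟪P - x, y - P⟫ + t ^ 2 * ‖y - P‖ ^ 2) := by
        ring
      nlinarith [hge, hfact, ht0]
    have hip : ⟪P - x, y - P⟫ = -⟪y - P, x - P⟫ := by
      rw [show (P : H) - x = -(x - P) by abel, inner_neg_left, real_inner_comm]
    rw [hip] at hdiv
    have hmul := mul_le_mul_of_nonneg_left hdiv hγ.le
    have hexp : γ * (f y - f P + 1 / (2 * γ) * (2 * -⟪y - P, x - P⟫ + t * ‖y - P‖ ^ 2))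
        = γ * (f y - f P) - ⟪y - P, x - P⟫ + t / 2 * ‖y - P‖ ^ 2 := by
      field_simp
      ring
    rw [hexp, mul_zero] at hmul
    linarith
  -- take t → 0 via: for all ε > 0 ...
  by_contra hcon
  push_neg at hcon
  set c := ⟪y - P, x - P⟫ - γ * (f y - f P) with hc
  have hcpos : 0 < c := by simp only [hc]; linarith
  have hn2 : (0:ℝ) < ‖y - P‖ ^ 2 + 1 := by positivity
  set t0 : ℝ := min 1 (c / (‖y - P‖ ^ 2 + 1)) with ht0def
  have ht0pos : 0 < t0 := lt_min one_pos (by positivity)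
  have ht0le : t0 ≤ 1 := min_le_left _ _
  have := key t0 ht0pos ht0le
  have ht0small : t0 * (‖y - P‖ ^ 2 + 1) ≤ c := by
    calc t0 * (‖y - P‖ ^ 2 + 1) ≤ (c / (‖y - P‖ ^ 2 + 1)) * (‖y - P‖ ^ 2 + 1) :=
      mul_le_mul_of_nonneg_right (min_le_right _ _) hn2.le
    _ = c := by field_simp
  nlinarith [this, ht0small, ht0pos]
end aux5
section aux6
variable {H : Type*} [NormedAddCommGroup H] [InnerProductSpace ℝ H]

lemma norm_le_of_sq_le_sq {a b : H} (h : ‖a‖ ^ 2 ≤ ‖b‖ ^ 2) : ‖a‖ ≤ ‖b‖ := by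
  have := Real.sqrt_le_sqrt h
  rwa [Real.sqrt_sq (norm_nonneg a), Real.sqrt_sq (norm_nonneg b)] at this

lemma prox_firm (f : H → ℝ) (hfconv : ConvexOn ℝ Set.univ f) (γ : ℝ) (hγ : 0 < γ)
    (proxf : H → H)
    (hprox : ∀ x, IsMinOn (fun y => f y + (1 / (2 * γ)) * ‖y - x‖ ^ 2) Set.univ (proxf x))
    (x x' : H) :
    ‖proxf x - proxf x'‖ ^ 2 ≤ ⟪proxf x - proxf x', x - x'⟫ := by
  have h1 := prox_subgrad f hfconv γ hγ proxf hprox x (proxf x')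
  have h2 := prox_subgrad f hfconv γ hγ proxf hprox x' (proxf x)
  -- h1 : ⟪P' − P, x − P⟫ ≤ γ(f P' − f P) ; h2 : ⟪P − P', x' − P'⟫ ≤ γ(f P − f P')
  have hadd : ⟪proxf x' - proxf x, x - proxf x⟫ + ⟪proxf x - proxf x', x' - proxf x'⟫ ≤ 0 := by
    linarith [h1, h2]
  have e1 : ⟪proxf x' - proxf x, x - proxf x⟫ = -⟪proxf x - proxf x', x - proxf x⟫ := by
    rw [show proxf x' - proxf x = -(proxf x - proxf x') by abel, inner_neg_left]
  rw [e1] at hadd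
  have e2 : ⟪proxf x - proxf x', x - proxf x⟫ - ⟪proxf x - proxf x', x' - proxf x'⟫
      = ⟪proxf x - proxf x', x - x'⟫ - ‖proxf x - proxf x'‖ ^ 2 := by
    rw [← inner_sub_right, ← real_inner_self_eq_norm_sq, ← inner_sub_right]
    congr 1
    abel
  linarith [hadd, e2.symm.le, e2.le]

lemma refl_nonexp (f : H → ℝ) (hfconv : ConvexOn ℝ Set.univ f) (γ : ℝ) (hγ : 0 < γ)
    (proxf : H → H)
    (hprox : ∀ x, IsMinOn (fun y => f y + (1 / (2 * γ)) * ‖y - x‖ ^ 2) Set.univ (proxf x))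
    (x x' : H) :
    ‖((2:ℝ) • proxf x - x) - ((2:ℝ) • proxf x' - x')‖ ^ 2 ≤ ‖x - x'‖ ^ 2 := by
  have hfirm := prox_firm f hfconv γ hγ proxf hprox x x'
  have hid : ((2:ℝ) • proxf x - x) - ((2:ℝ) • proxf x' - x')
      = (2:ℝ) • (proxf x - proxf x') - (x - x') := by module
  rw [hid]
  rw [norm_sub_sq_real, norm_smul, real_inner_smul_left]
  have h2 : ‖(2:ℝ)‖ = 2 := by norm_num
  rw [h2]
  nlinarith [hfirm]
end aux6
section aux7
variable {H : Type*} [NormedAddCommGroup H] [InnerProductSpace ℝ H]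

lemma fdrs_averaged (P gradh proxf : H → H)
    (hPlin : ∀ (c : ℝ) (a b : H), P (c • a + b) = c • P a + P b)
    (hPiso : ∀ a, ‖(2:ℝ) • P a - a‖ ^ 2 = ‖a‖ ^ 2)
    (γ βV α : ℝ) (hγ0 : 0 < γ) (hγ2 : γ < 2 * βV) (hβV : 0 < βV)
    (hα : α = 2 * βV / (4 * βV - γ))
    (hcoco : ∀ a b, βV * ‖gradh a - gradh b‖ ^ 2 ≤ ⟪gradh a - gradh b, a - b⟫)
    (hrefl : ∀ x x', ‖((2:ℝ) • proxf x - x) - ((2:ℝ) • proxf x' - x')‖ ^ 2 ≤ ‖x - x'‖ ^ 2)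
    (T : H → H)
    (hT : ∀ z, T z = (1 / 2 : ℝ) • (z - γ • gradh z)
        + (1 / 2 : ℝ) • ((2 : ℝ) • proxf ((2 : ℝ) • P (z - γ • gradh z) - (z - γ • gradh z))
            - ((2 : ℝ) • P (z - γ • gradh z) - (z - γ • gradh z)))) :
    ∀ u v, ‖T u - T v‖ ^ 2 + ((1 - α) / α) * ‖(u - T u) - (v - T v)‖ ^ 2 ≤ ‖u - v‖ ^ 2 := by
  intro u v
  set s1 : ℝ := (2 * βV - γ) / γ with hs1
  have hs1pos : 0 < s1 := by apply div_pos <;> linarith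
  set F : H → H := fun z => z - γ • gradh z with hF
  set C : H → H := fun x => (1 / 2 : ℝ) • x
      + (1 / 2 : ℝ) • ((2 : ℝ) • proxf ((2 : ℝ) • P x - x) - ((2 : ℝ) • P x - x)) with hC
  have hTC : ∀ z, T z = C (F z) := fun z => hT z
  -- forward step inequality
  have hFor : ‖F u - F v‖ ^ 2 ≤ ‖u - v‖ ^ 2 - s1 * ‖(u - F u) - (v - F v)‖ ^ 2 := by
    have hres : (u - F u) - (v - F v) = γ • (gradh u - gradh v) := by
      simp only [hF]; module
    have hFuv : F u - F v = (u - v) - γ • (gradh u - gradh v) := by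
      simp only [hF]; module
    rw [hres, hFuv]
    rw [norm_sub_sq_real, real_inner_smul_right, norm_smul, Real.norm_eq_abs,
      abs_of_pos hγ0]
    have hc := hcoco u v
    rw [real_inner_comm] at hc
    have hgoal : s1 * (γ * ‖gradh u - gradh v‖) ^ 2 = γ * (2 * βV - γ) * ‖gradh u - gradh v‖ ^ 2 := by
      rw [hs1]; field_simp
    nlinarith [hc, hgoal]
  -- DRS (C) inequality
  have hCin : ∀ x y, ‖C x - C y‖ ^ 2 + ‖(x - C x) - (y - C y)‖ ^ 2 ≤ ‖x - y‖ ^ 2 := by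
    intro x y
    set A : H := x - y with hA
    set B : H := ((2:ℝ) • proxf ((2:ℝ) • P x - x) - ((2:ℝ) • P x - x))
      - ((2:ℝ) • proxf ((2:ℝ) • P y - y) - ((2:ℝ) • P y - y)) with hB
    have hBle : ‖B‖ ^ 2 ≤ ‖A‖ ^ 2 := by
      have h1 := hrefl ((2:ℝ) • P x - x) ((2:ℝ) • P y - y)
      have h2 : ((2:ℝ) • P x - x) - ((2:ℝ) • P y - y) = (2:ℝ) • P (x - y) - (x - y) := by
        have := hPlin (-1 : ℝ) y x
        have hxy : P (x - y) = P x - P y := by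
          have h3 : x - y = (-1 : ℝ) • y + x := by module
          rw [h3, this]; module
        rw [hxy]; module
      rw [h2] at h1
      calc ‖B‖ ^ 2 ≤ ‖(2:ℝ) • P (x - y) - (x - y)‖ ^ 2 := h1
      _ = ‖x - y‖ ^ 2 := hPiso (x - y)
    have hCxy : C x - C y = (1/2 : ℝ) • A + (1/2 : ℝ) • B := by
      simp only [hC, hA, hB]; module
    have hRxy : (x - C x) - (y - C y) = (1/2 : ℝ) • A - (1/2 : ℝ) • B := by
      simp only [hC, hA, hB]; module
    rw [hCxy, hRxy]
    rw [norm_add_sq_real, norm_sub_sq_real, norm_smul, norm_smul]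
    simp only [Real.norm_eq_abs]
    rw [abs_of_pos (by norm_num : (0:ℝ) < 1/2)]
    nlinarith [hBle]
  -- composition
  set a : H := (u - F u) - (v - F v) with ha
  set b : H := (F u - C (F u)) - (F v - C (F v)) with hb
  have h1 : ‖T u - T v‖ ^ 2 + ‖b‖ ^ 2 ≤ ‖F u - F v‖ ^ 2 := by
    rw [hTC, hTC]
    exact hCin (F u) (F v)
  have hsum : (u - T u) - (v - T v) = a + b := by
    rw [hTC, hTC, ha, hb]; module
  rw [hsum]
  have hαval : (1 - α) / α = s1 / (s1 + 1) := by
    rw [hα, hs1]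
    have h4 : (0:ℝ) < 4 * βV - γ := by linarith
    have h2 : (0:ℝ) < 2 * βV := by linarith
    rw [div_add_one hγ0.ne', div_div_div_cancel_right₀ hγ0.ne', one_sub_div h4.ne',
      div_div_div_cancel_right₀ h4.ne']
    ring
  rw [hαval]
  have hkey : s1 / (s1 + 1) * ‖a + b‖ ^ 2 ≤ s1 * ‖a‖ ^ 2 + ‖b‖ ^ 2 := by
    rw [div_mul_eq_mul_div, div_le_iff₀ (by linarith : (0:ℝ) < s1 + 1)]
    have hip := real_inner_le_norm a b
    have hexp := norm_add_sq_real a b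
    nlinarith [sq_nonneg (s1 * ‖a‖ - ‖b‖), mul_le_mul_of_nonneg_left hip
      (by linarith : (0:ℝ) ≤ 2 * s1), hexp]
  linarith [h1, hFor, hkey]
end aux7
section aux8
variable {H : Type*} [NormedAddCommGroup H] [InnerProductSpace ℝ H]

lemma km_decrease (T : H → H) (α : ℝ) (hα0 : 0 < α)
    (havg : ∀ u v, ‖T u - T v‖ ^ 2 + ((1 - α) / α) * ‖(u - T u) - (v - T v)‖ ^ 2 ≤ ‖u - v‖ ^ 2)
    (zs : H) (hzs : T zs = zs) (w : H) (lam : ℝ) (hl0 : 0 < lam) :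
    ‖((1 - lam) • w + lam • T w) - zs‖ ^ 2
      ≤ ‖w - zs‖ ^ 2 - ((1 - α * lam) * lam / α) * ‖T w - w‖ ^ 2 := by
  set A : H := w - zs with hA
  set B : H := T w - zs with hB
  have hineq : ‖B‖ ^ 2 + ((1 - α) / α) * ‖T w - w‖ ^ 2 ≤ ‖A‖ ^ 2 := by
    have := havg w zs
    rw [hzs] at this
    have h2 : (w - T w) - (zs - zs) = -(T w - w) := by abel
    rw [h2, norm_neg] at this
    exact this
  have hz' : ((1 - lam) • w + lam • T w) - zs = (1 - lam) • A + lam • B := by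
    simp only [hA, hB]; module
  rw [hz']
  have e1 : ‖(1 - lam) • A + lam • B‖ ^ 2
      = (1 - lam) ^ 2 * ‖A‖ ^ 2 + 2 * ((1 - lam) * lam) * ⟪A, B⟫ + lam ^ 2 * ‖B‖ ^ 2 := by
    rw [norm_add_sq_real, norm_smul, norm_smul, real_inner_smul_left, real_inner_smul_right]
    simp only [Real.norm_eq_abs, mul_pow, sq_abs]
    ring
  have e2 : ‖T w - w‖ ^ 2 = ‖A‖ ^ 2 - 2 * ⟪A, B⟫ + ‖B‖ ^ 2 := by
    have h3 : T w - w = B - A := by simp only [hA, hB]; abel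
    rw [h3, norm_sub_sq_real, real_inner_comm]
    ring
  have hexp : (1 - α * lam) * lam / α = lam * ((1 - α) / α) + lam - lam ^ 2 := by
    field_simp
    ring
  rw [e1, hexp, e2]
  have hml := mul_le_mul_of_nonneg_left hineq hl0.le
  rw [e2] at hml
  nlinarith [hml]

lemma km_residual_mono (T : H → H) (α : ℝ) (hα0 : 0 < α)
    (havg : ∀ u v, ‖T u - T v‖ ^ 2 + ((1 - α) / α) * ‖(u - T u) - (v - T v)‖ ^ 2 ≤ ‖u - v‖ ^ 2)
    (w : H) (lam : ℝ) (hl0 : 0 < lam) (hl1 : lam * α ≤ 1) :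
    ‖T ((1 - lam) • w + lam • T w) - ((1 - lam) • w + lam • T w)‖ ≤ ‖T w - w‖ := by
  set N : H → H := fun x => x + (1 / α) • (T x - x) with hN
  have hNnon : ∀ u v, ‖N u - N v‖ ≤ ‖u - v‖ := by
    intro u v
    apply norm_le_of_sq_le_sq
    set δ : H := (T u - u) - (T v - v) with hδ
    have hTd : T u - T v = (u - v) + δ := by simp only [hδ]; abel
    have havg' := havg u v
    rw [hTd, norm_add_sq_real] at havg'
    have hδ' : (u - T u) - (v - T v) = -δ := by simp only [hδ]; abel
    rw [hδ', norm_neg] at havg'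
    -- 2⟪u−v,δ⟫ ≤ −(1 + (1−α)/α)‖δ‖²
    have hbound : 2 * ⟪u - v, δ⟫ ≤ -((1 + (1 - α) / α)) * ‖δ‖ ^ 2 := by nlinarith [havg']
    have h1a : 1 + (1 - α) / α = 1 / α := by field_simp; ring
    rw [h1a] at hbound
    have hNd : N u - N v = (u - v) + (1 / α) • δ := by simp only [hN, hδ]; module
    rw [hNd, norm_add_sq_real, real_inner_smul_right, norm_smul]
    simp only [Real.norm_eq_abs, mul_pow, sq_abs]
    have hiα : (0:ℝ) < 1 / α := by positivity
    nlinarith [mul_le_mul_of_nonneg_left hbound hiα.le, sq_nonneg ‖δ‖]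
  set μ : ℝ := lam * α with hμ
  have hμ0 : 0 < μ := by positivity
  have hαne : α ≠ 0 := ne_of_gt hα0
  have hrel : ∀ x, T x - x = α • (N x - x) := by
    intro x
    simp only [hN]
    rw [show x + (1 / α) • (T x - x) - x = (1 / α) • (T x - x) by abel, smul_smul]
    rw [show α * (1 / α) = 1 by field_simp, one_smul]
  set w' : H := (1 - lam) • w + lam • T w with hw'
  have hw'2 : w' = w + μ • (N w - w) := by
    simp only [hw', hN, hμ]
    rw [show w + (1/α) • (T w - w) - w = (1/α) • (T w - w) by abel, smul_smul]
    rw [show lam * α * (1 / α) = lam by field_simp]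
    module
  have hdecomp : N w' - w' = (N w' - N w) + (1 - μ) • (N w - w) := by
    rw [hw'2]; module
  have hstep : ‖N w' - w'‖ ≤ ‖N w - w‖ := by
    calc ‖N w' - w'‖ ≤ ‖N w' - N w‖ + ‖(1 - μ) • (N w - w)‖ := by
          rw [hdecomp]; exact norm_add_le _ _
    _ ≤ ‖w' - w‖ + (1 - μ) * ‖N w - w‖ := by
          have := hNnon w' w
          rw [norm_smul, Real.norm_eq_abs, abs_of_nonneg (by linarith : (0:ℝ) ≤ 1 - μ)]
          linarith
    _ = μ * ‖N w - w‖ + (1 - μ) * ‖N w - w‖ := by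
          rw [hw'2, show w + μ • (N w - w) - w = μ • (N w - w) by abel, norm_smul,
            Real.norm_eq_abs, abs_of_pos hμ0]
    _ = ‖N w - w‖ := by ring
  calc ‖T w' - w'‖ = α * ‖N w' - w'‖ := by
        rw [hrel w', norm_smul, Real.norm_eq_abs, abs_of_pos hα0]
  _ ≤ α * ‖N w - w‖ := by exact mul_le_mul_of_nonneg_left hstep hα0.le
  _ = ‖T w - w‖ := by rw [hrel w, norm_smul, Real.norm_eq_abs, abs_of_pos hα0]
end aux8
section aux9
open Finset in
lemma seq_little_o (r : ℕ → ℝ) (hnn : ∀ k, 0 ≤ r k) (hmono : Antitone r) (Cb : ℝ)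
    (hsum : ∀ n, (∑ j ∈ Finset.range n, r j) ≤ Cb) :
    (∀ k : ℕ, ((k : ℝ) + 1) * r k ≤ Cb) ∧
    Filter.Tendsto (fun k : ℕ => ((k : ℝ) + 1) * r k) Filter.atTop (nhds 0) := by
  have hpart : ∀ k : ℕ, ((k : ℝ) + 1) * r k ≤ ∑ j ∈ Finset.range (k + 1), r j := by
    intro k
    have h1 : (Finset.range (k + 1)).card • r k ≤ ∑ j ∈ Finset.range (k + 1), r j := by
      apply Finset.card_nsmul_le_sum
      intro j hj
      exact hmono (Nat.lt_succ_iff.mp (Finset.mem_range.mp hj))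
    rw [Finset.card_range, nsmul_eq_mul] at h1
    push_cast at h1
    linarith
  constructor
  · intro k; exact le_trans (hpart k) (hsum (k + 1))
  · have hsummable : Summable r := by
      apply summable_of_sum_range_le hnn hsum
    set ℓ : ℝ := ∑' j, r j with hℓ
    have hS : Filter.Tendsto (fun n => ∑ j ∈ Finset.range n, r j) Filter.atTop (nhds ℓ) :=
      hsummable.hasSum.tendsto_sum_nat
    rw [Metric.tendsto_atTop] at hS ⊢
    intro ε hε
    obtain ⟨N, hN⟩ := hS (ε / 4) (by linarith)
    refine ⟨2 * N + 1, fun k hk => ?_⟩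
    have hNk : N ≤ k + 1 := by omega
    have htail : ∑ j ∈ Finset.Ico N (k + 1), r j < ε / 2 := by
      have e1 : ∑ j ∈ Finset.Ico N (k + 1), r j
          = (∑ j ∈ Finset.range (k + 1), r j) - ∑ j ∈ Finset.range N, r j := by
        rw [Finset.sum_Ico_eq_sub _ hNk]
      have d1 := hN (k + 1) (by omega)
      have d2 := hN N (le_refl N)
      rw [Real.dist_eq] at d1 d2
      rw [e1]
      cases' abs_lt.1 d1 with d1a d1b
      cases' abs_lt.1 d2 with d2a d2b
      linarith
    have hcard : ((k + 1 - N : ℕ) : ℝ) * r k ≤ ∑ j ∈ Finset.Ico N (k + 1), r j := by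
      have h1 : (Finset.Ico N (k + 1)).card • r k ≤ ∑ j ∈ Finset.Ico N (k + 1), r j := by
        apply Finset.card_nsmul_le_sum
        intro j hj
        rw [Finset.mem_Ico] at hj
        exact hmono (by omega : j ≤ k)
      rwa [Nat.card_Ico, nsmul_eq_mul] at h1
    have hcast : ((k + 1 - N : ℕ) : ℝ) = (k : ℝ) + 1 - N := by
      rw [Nat.cast_sub hNk]; push_cast; ring
    rw [hcast] at hcard
    have hhalf : ((k : ℝ) + 1) / 2 ≤ (k : ℝ) + 1 - N := by
      have h2N : (2 * N + 1 : ℕ) ≤ k := hk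
      have h2N' : ((2 * N + 1 : ℕ) : ℝ) ≤ (k : ℝ) := Nat.cast_le.2 h2N
      push_cast at h2N'
      linarith
    have hrknn := hnn k
    rw [Real.dist_eq, sub_zero, abs_of_nonneg (by positivity : (0:ℝ) ≤ ((k:ℝ)+1) * r k)]
    nlinarith [hcard, htail, hhalf, hrknn]
end aux9

section aux10
variable {H : Type*} [NormedAddCommGroup H] [InnerProductSpace ℝ H]

lemma gap_upper_alg (u m es d g1 gs : H) (γ Dv Lip : ℝ) (hγ0 : 0 < γ)
    (hme : ⟪m, es + d - m⟫ = 0) (hdD : ‖d‖ ≤ Dv) (hgg : ‖g1 - gs‖ ≤ Lip * Dv) :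
    ⟪u + m, -u - es - d + m - γ • g1⟫ + γ * ⟪g1, m⟫
      ≤ ‖u‖ * (‖es‖ + Dv + γ * (Lip * Dv) + γ * ‖gs‖) := by
  have hme' : ⟪m, es⟫ + ⟪m, d⟫ - ⟪m, m⟫ = 0 := by
    simpa [inner_add_right, inner_sub_right] using hme
  have c1 : ⟪m, u⟫ = ⟪u, m⟫ := real_inner_comm u m
  have c2 : ⟪g1, m⟫ = ⟪m, g1⟫ := real_inner_comm m g1
  have hsplit : ⟪u, g1⟫ = ⟪u, g1 - gs⟫ + ⟪u, gs⟫ := by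
    rw [← inner_add_right]
    congr 1
    abel
  have hDnn : 0 ≤ Dv := le_trans (norm_nonneg d) hdD
  have b1 : -⟪u, es⟫ ≤ ‖u‖ * ‖es‖ := by
    have h3 := real_inner_le_norm u (-es)
    rwa [inner_neg_right, norm_neg] at h3
  have b2 : -⟪u, d⟫ ≤ ‖u‖ * Dv := by
    have h3 := real_inner_le_norm u (-d)
    rw [inner_neg_right, norm_neg] at h3
    calc -⟪u, d⟫ ≤ ‖u‖ * ‖d‖ := h3
    _ ≤ ‖u‖ * Dv := mul_le_mul_of_nonneg_left hdD (norm_nonneg u)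
  have b3 : -⟪u, g1 - gs⟫ ≤ ‖u‖ * (Lip * Dv) := by
    have h3 := real_inner_le_norm u (-(g1 - gs))
    rw [inner_neg_right, norm_neg] at h3
    calc -⟪u, g1 - gs⟫ ≤ ‖u‖ * ‖g1 - gs‖ := h3
    _ ≤ ‖u‖ * (Lip * Dv) := mul_le_mul_of_nonneg_left hgg (norm_nonneg u)
  have b4 : -⟪u, gs⟫ ≤ ‖u‖ * ‖gs‖ := by
    have h3 := real_inner_le_norm u (-gs)
    rwa [inner_neg_right, norm_neg] at h3
  have b3' := mul_le_mul_of_nonneg_left b3 hγ0.le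
  have b4' := mul_le_mul_of_nonneg_left b4 hγ0.le
  have huu : (0:ℝ) ≤ ⟪u, u⟫ := real_inner_self_nonneg
  simp only [inner_add_left, inner_sub_right, inner_add_right, inner_neg_right,
    real_inner_smul_right]
  nlinarith [hme', c1, c2, hsplit, b1, b2, b3', b4', huu]
end aux10

/-- nonergodic convergence of FDRS. -/
theorem fdrs_nonergodic_convergence
    {H : Type*} [NormedAddCommGroup H] [InnerProductSpace ℝ H] [CompleteSpace H]
    (V : Submodule ℝ H) [CompleteSpace V]
    (PV : H → H) (hPV : ∀ x, PV x = (V.orthogonalProjectionOnto x : H))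
    (f g : H → ℝ) (gradg gradh proxf : H → H) (h : H → ℝ)
    (β βV γ α : ℝ) (hβ : 0 < β) (hβV : 0 < βV)
    (hγ : γ ∈ Set.Ioo (0 : ℝ) (2 * βV))
    (hα : α = 2 * βV / (4 * βV - γ))
    (hfconv : ConvexOn ℝ Set.univ f) (hfcont : Continuous f)
    (hgconv : ConvexOn ℝ Set.univ g)
    (hgdiff : ∀ x, HasGradientAt g (gradg x) x)
    (hglip : LipschitzWith (1 / β).toNNReal gradg)
    (hh : ∀ x, h x = g (PV x))
    (hgradh : ∀ x, gradh x = PV (gradg (PV x)))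
    (hgradhlip : LipschitzWith (1 / βV).toNNReal gradh)
    (hprox : ∀ x, IsMinOn (fun y => f y + (1 / (2 * γ)) * ‖y - x‖ ^ 2) Set.univ (proxf x))
    (T : H → H)
    (hT : ∀ z, T z = (1 / 2 : ℝ) • (z - γ • gradh z)
        + (1 / 2 : ℝ) • ((2 : ℝ) • proxf ((2 : ℝ) • PV (z - γ • gradh z) - (z - γ • gradh z))
            - ((2 : ℝ) • PV (z - γ • gradh z) - (z - γ • gradh z))))
    -- relaxation parameters and iterates
    (lam : ℕ → ℝ) (hlam : ∀ k, lam k ∈ Set.Ioo (0 : ℝ) (1 / α))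
    (τ : ℝ) (hτ : τ = ⨅ j : ℕ, (1 - α * lam j) * lam j / α) (hτpos : 0 < τ)
    (z : ℕ → H)
    (hz : ∀ k, z (k + 1) = (1 - lam k) • z k + lam k • T (z k))
    (xh xf : ℕ → H)
    (hxh : ∀ k, xh k = PV (z k))
    (hxf : ∀ k, xf k = proxf ((2 : ℝ) • PV (z k - γ • gradh (z k)) - (z k - γ • gradh (z k))))
    -- a fixed point z* of T, x* := P_V z*, and a subgradient decomposition of 0
    (zs xs : H) (hzs : T zs = zs) (hxs : xs = PV zs)
    (p q : H)
    (hp : ∀ y : H, f xs + ⟪y - xs, p⟫ ≤ f y)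
    (hq : q ∈ Vᗮ)
    (hpq : p + gradh xs + q = 0) :
    -- (i)
    (∀ k : ℕ, ‖xf k - xh k‖ ≤ ‖z 0 - zs‖ / Real.sqrt (τ * (k + 1))) ∧
    ((fun k : ℕ => ‖xf k - xh k‖) =o[atTop] fun k : ℕ => 1 / Real.sqrt (k + 1)) ∧
    -- (ii)
    (∀ k : ℕ,
      -(‖z 0 - zs‖ * ‖p‖ / Real.sqrt (τ * (k + 1)))
        ≤ f (xf k) + h (xh k) - f xs - h xs ∧
      f (xf k) + h (xh k) - f xs - h xs
        ≤ (‖zs - xs‖ + (1 + γ / βV) * ‖z 0 - zs‖ + γ * ‖gradh xs‖) * ‖z 0 - zs‖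
            / (γ * Real.sqrt (τ * (k + 1)))) ∧
    -- (iii)
    ((fun k : ℕ => |f (xf k) + h (xh k) - f xs - h xs|)
      =o[atTop] fun k : ℕ => 1 / Real.sqrt (k + 1)) := by
  obtain ⟨hγ0, hγ2⟩ := hγ
  have hβV2 : (0:ℝ) < 2 * βV := by linarith
  have h4γ : (0:ℝ) < 4 * βV - γ := by linarith
  have hα0 : 0 < α := by rw [hα]; positivity
  -- projection facts
  have hPlin : ∀ (c : ℝ) (a b : H), PV (c • a + b) = c • PV a + PV b := by
    intro c a b
    simp [hPV, map_add, map_smul]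
  have hPadd : ∀ a b : H, PV (a + b) = PV a + PV b := by
    intro a b; simp [hPV, map_add]
  have hPsmul : ∀ (c : ℝ) (a : H), PV (c • a) = c • PV a := by
    intro c a; simp [hPV, map_smul]
  have hPsub : ∀ a b : H, PV (a - b) = PV a - PV b := by
    intro a b; simp [hPV, map_sub]
  have hPmemV : ∀ a : H, PV a ∈ V := by
    intro a; rw [hPV]; exact (V.orthogonalProjectionOnto a).2
  have hPP : ∀ a : H, PV (PV a) = PV a := by
    intro a
    rw [hPV a, hPV ((V.orthogonalProjectionOnto a : H))]
    exact congrArg _ (Submodule.orthogonalProjectionOnto_mem_subspace_eq_self (V.orthogonalProjectionOnto a))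
  have horth : ∀ (a : H) (w : H), w ∈ V → ⟪a - PV a, w⟫ = 0 := by
    intro a w hw
    rw [hPV]
    exact Submodule.starProjection_inner_eq_zero (K := V) a w hw
  have hPself : ∀ a b : H, ⟪PV a, b⟫ = ⟪a, PV b⟫ := by
    intro a b
    rw [hPV, hPV]
    exact Submodule.inner_starProjection_left_eq_right V a b
  have hPiso : ∀ a : H, ‖(2:ℝ) • PV a - a‖ ^ 2 = ‖a‖ ^ 2 := by
    intro a
    have hdecomp : (2:ℝ) • PV a - a = PV a - (a - PV a) := by module
    have hdecomp2 : a = PV a + (a - PV a) := by abel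
    have hor : ⟪PV a, a - PV a⟫ = 0 := by
      rw [real_inner_comm]
      exact horth a (PV a) (hPmemV a)
    rw [hdecomp]
    rw [norm_sub_sq_real, hor]
    conv_rhs => rw [hdecomp2]
    rw [norm_add_sq_real, hor]
    ring
  -- gradh facts
  have hgradhV : ∀ x : H, gradh x ∈ V := by
    intro x; rw [hgradh]; exact hPmemV _
  have hPgradh : ∀ x : H, PV (gradh x) = gradh x := by
    intro x; rw [hgradh]; exact hPP _
  have hgradhPz : ∀ x : H, gradh (PV x) = gradh x := by
    intro x; rw [hgradh, hgradh, hPP]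
  -- real Lipschitz bound for gradh
  have hβVi : (0:ℝ) ≤ 1 / βV := by positivity
  have hliph : ∀ a b : H, ‖gradh a - gradh b‖ ≤ 1 / βV * ‖a - b‖ := by
    intro a b
    have := hgradhlip.dist_le_mul a b
    rw [dist_eq_norm, dist_eq_norm] at this
    rwa [Real.coe_toNNReal _ hβVi] at this
  -- convexity of h
  have hhconv : ConvexOn ℝ Set.univ h := by
    refine ⟨convex_univ, fun u _ v _ a b ha hb hab => ?_⟩
    have hP : PV (a • u + b • v) = a • PV u + b • PV v := by
      rw [hPadd, hPsmul, hPsmul]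
    have := hgconv.2 (Set.mem_univ (PV u)) (Set.mem_univ (PV v)) ha hb hab
    simp only [hh, hP]
    exact this
  -- differentiability of h
  have hhdiff : ∀ x : H, HasGradientAt h (gradh x) x := by
    intro x
    set Pc : H →L[ℝ] H := (V.subtypeL).comp (V.orthogonalProjectionOnto) with hPc
    have hfun : PV = fun y => Pc y := by
      funext y; simp [hPV, hPc]
    have h2 : HasFDerivAt PV Pc x := by
      rw [hfun]; exact Pc.hasFDerivAt
    have h1 : HasFDerivAt g (InnerProductSpace.toDual ℝ H (gradg (PV x))) (PV x) :=
      (hgdiff (PV x)).hasFDerivAt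
    have h3 : HasFDerivAt h ((InnerProductSpace.toDual ℝ H (gradg (PV x))).comp Pc) x := by
      have h4 := h1.comp x h2
      have h5 : h = (g ∘ PV) := funext fun y => hh y
      rw [h5]; exact h4
    have h6 : (InnerProductSpace.toDual ℝ H (gradg (PV x))).comp Pc
        = InnerProductSpace.toDual ℝ H (gradh x) := by
      ext v
      simp only [ContinuousLinearMap.comp_apply, InnerProductSpace.toDual_apply_apply]
      have : (Pc v : H) = PV v := by rw [hfun]
      rw [this, hgradh, ← hPself]
    rw [h6] at h3
    simpa using h3.hasGradientAt
  -- cocoercivity of gradh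
  have hcoco : ∀ a b : H, βV * ‖gradh a - gradh b‖ ^ 2 ≤ ⟪gradh a - gradh b, a - b⟫ := by
    intro a b
    have hpos : (0:ℝ) < 1 / βV := by positivity
    have := cocoercive_of_convex_lip h gradh hhconv hhdiff (1 / βV) hpos hliph a b
    rwa [one_div_one_div] at this
  -- prox facts
  have hpsub := prox_subgrad f hfconv γ hγ0 proxf hprox
  have hrefl := refl_nonexp f hfconv γ hγ0 proxf hprox
  -- averagedness of T
  have havg := fdrs_averaged PV gradh proxf hPlin hPiso γ βV α hγ0 hγ2 hβV hα hcoco hrefl T hT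
  -- identity T w - w = proxf (refl) - PV w
  have hTzw : ∀ w : H, T w - w
      = proxf ((2:ℝ) • PV (w - γ • gradh w) - (w - γ • gradh w)) - PV w := by
    intro w
    rw [hT w]
    have hPw : PV (w - γ • gradh w) = PV w - γ • gradh w := by
      rw [hPsub, hPsmul, hPgradh]
    rw [hPw]
    module
  have hukTz : ∀ k, xf k - xh k = T (z k) - z k := by
    intro k; rw [hxf, hxh, hTzw]
  -- relaxation parameters
  have hlam0 : ∀ k, 0 < lam k := fun k => (hlam k).1
  have hlamlt : ∀ k, lam k < 1 / α := fun k => (hlam k).2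
  have hlamα : ∀ k, lam k * α ≤ 1 := by
    intro k
    have := hlamlt k
    rw [lt_div_iff₀ hα0] at this
    linarith
  set D : ℝ := ‖z 0 - zs‖ with hD
  have hDnn : 0 ≤ D := norm_nonneg _
  set r : ℕ → ℝ := fun k => ‖T (z k) - z k‖ ^ 2 with hr
  have hrnn : ∀ k, 0 ≤ r k := fun k => sq_nonneg _
  have hrmono : Antitone r := by
    apply antitone_nat_of_succ_le
    intro k
    have hmon := km_residual_mono T α hα0 havg (z k) (lam k) (hlam0 k) (hlamα k)
    rw [← hz k] at hmon
    exact pow_le_pow_left₀ (norm_nonneg _) hmon 2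
  have hτle : ∀ k, τ ≤ (1 - α * lam k) * lam k / α := by
    intro k
    rw [hτ]
    apply ciInf_le
    refine ⟨0, ?_⟩
    rintro x ⟨j, rfl⟩
    have h1 : 0 ≤ 1 - α * lam j := by
      have := hlamlt j
      rw [lt_div_iff₀ hα0] at this
      linarith
    have h2 := (hlam j).1
    positivity
  have hdec : ∀ k, ‖z (k+1) - zs‖ ^ 2 ≤ ‖z k - zs‖ ^ 2 - τ * r k := by
    intro k
    have h1 := km_decrease T α hα0 havg zs hzs (z k) (lam k) (hlam0 k)
    rw [← hz k] at h1
    have h2 : τ * r k ≤ ((1 - α * lam k) * lam k / α) * r k :=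
      mul_le_mul_of_nonneg_right (hτle k) (hrnn k)
    simp only [hr] at h2 ⊢
    linarith [h1, h2]
  have hsumz : ∀ n, (∑ j ∈ Finset.range n, r j) ≤ D ^ 2 / τ := by
    have key : ∀ n, τ * (∑ j ∈ Finset.range n, r j) + ‖z n - zs‖ ^ 2 ≤ ‖z 0 - zs‖ ^ 2 := by
      intro n
      induction n with
      | zero => simp
      | succ n ih =>
        rw [Finset.sum_range_succ]
        have := hdec n
        linarith
    intro n
    have h1 := key n
    rw [le_div_iff₀ hτpos]
    nlinarith [sq_nonneg ‖z n - zs‖, h1]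
  have hfejer2 : ∀ k, ‖z k - zs‖ ^ 2 ≤ D ^ 2 := by
    intro k
    induction k with
    | zero => exact le_refl _
    | succ k ih =>
      have h1 := hdec k
      have h2 := mul_nonneg hτpos.le (hrnn k)
      linarith
  have hfejer : ∀ k, ‖z k - zs‖ ≤ D := fun k => norm_le_of_sq_le_sq (hfejer2 k)
  obtain ⟨hbnd, htend⟩ := seq_little_o r hrnn hrmono (D ^ 2 / τ) hsumz
  -- (i) per-k bound
  have hnormuk : ∀ k : ℕ, ‖xf k - xh k‖ ≤ D / Real.sqrt (τ * ((k:ℝ) + 1)) := by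
    intro k
    have hpos : (0:ℝ) < τ * ((k:ℝ) + 1) := by positivity
    have h1 : r k ≤ D ^ 2 / (τ * ((k:ℝ) + 1)) := by
      rw [le_div_iff₀ hpos]
      calc r k * (τ * ((k:ℝ) + 1)) = τ * (((k:ℝ) + 1) * r k) := by ring
      _ ≤ τ * (D ^ 2 / τ) := mul_le_mul_of_nonneg_left (hbnd k) hτpos.le
      _ = D ^ 2 := by field_simp
    have h2 : ‖T (z k) - z k‖ ^ 2 ≤ (D / Real.sqrt (τ * ((k:ℝ) + 1))) ^ 2 := by
      rw [div_pow, Real.sq_sqrt hpos.le]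
      exact h1
    rw [hukTz k]
    have := Real.sqrt_le_sqrt h2
    rwa [Real.sqrt_sq (norm_nonneg _),
      Real.sqrt_sq (by positivity : (0:ℝ) ≤ D / Real.sqrt (τ * ((k:ℝ) + 1)))] at this
  -- (i) little-o
  have hsqrt_tend : Tendsto (fun k : ℕ => Real.sqrt (((k:ℝ) + 1) * r k)) atTop (𝓝 0) := by
    have hc : Tendsto Real.sqrt (𝓝 0) (𝓝 0) := by
      have := Real.continuous_sqrt.tendsto 0
      simpa using this
    exact hc.comp htend
  have hgnz : ∀ k : ℕ, (1 : ℝ) / Real.sqrt ((k:ℝ) + 1) ≠ 0 := by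
    intro k
    have : (0:ℝ) < Real.sqrt ((k:ℝ) + 1) := Real.sqrt_pos.2 (by positivity)
    positivity
  have hlittleo : (fun k : ℕ => ‖xf k - xh k‖) =o[atTop] fun k : ℕ => 1 / Real.sqrt ((k:ℝ) + 1) := by
    rw [isLittleO_iff_tendsto (fun k hk => absurd hk (hgnz k))]
    have heq : (fun k : ℕ => ‖xf k - xh k‖ / (1 / Real.sqrt ((k:ℝ) + 1)))
        = fun k : ℕ => Real.sqrt (((k:ℝ) + 1) * r k) := by
      funext k
      rw [div_div_eq_mul_div, div_one, hukTz k]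
      rw [show ‖T (z k) - z k‖ = Real.sqrt (r k) from (Real.sqrt_sq (norm_nonneg _)).symm]
      rw [← Real.sqrt_mul (hrnn k), mul_comm]
    rw [heq]
    exact hsqrt_tend
  -- gap lower bound
  have hgaplow : ∀ k, ⟪xf k - xh k, p⟫ ≤ f (xf k) + h (xh k) - f xs - h xs := by
    intro k
    have h1 := hp (xf k)
    have h2 := conv_grad_ineq h gradh hhconv hhdiff xs (xh k)
    have hmV : xh k - xs ∈ V := by
      rw [hxh, hxs, ← hPsub]; exact hPmemV _
    have hqorth : ⟪q, xh k - xs⟫ = 0 := by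
      rw [real_inner_comm]
      exact (Submodule.mem_orthogonal V q).1 hq _ hmV
    have hgseq : gradh xs = -p - q := by
      have h3 : gradh xs = (p + gradh xs + q) - p - q := by abel
      rw [hpq] at h3
      rw [h3]; abel
    have h4 : ⟪gradh xs, xh k - xs⟫ = -⟪p, xh k - xs⟫ := by
      rw [hgseq, inner_sub_left, inner_neg_left, hqorth]
      ring
    have h5 : ⟪xf k - xs, p⟫ - ⟪p, xh k - xs⟫ = ⟪xf k - xh k, p⟫ := by
      rw [real_inner_comm (xh k - xs) p, ← inner_sub_left]
      congr 1
      abel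
    linarith [h1, h2, h4, h5]
  -- the constant
  have hCnn : (0:ℝ) ≤ ‖zs - xs‖ + (1 + γ / βV) * D + γ * ‖gradh xs‖ := by
    have h1 : (0:ℝ) ≤ 1 + γ / βV := by positivity
    have h2 : (0:ℝ) ≤ (1 + γ / βV) * D := mul_nonneg h1 hDnn
    have h3 : (0:ℝ) ≤ γ * ‖gradh xs‖ := by positivity
    have h4 : (0:ℝ) ≤ ‖zs - xs‖ := norm_nonneg _
    linarith
  -- gap upper bound : γ * gap ≤ ‖u k‖ * C'
  have hgapup : ∀ k, γ * (f (xf k) + h (xh k) - f xs - h xs)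
      ≤ ‖xf k - xh k‖ * (‖zs - xs‖ + (1 + γ / βV) * D + γ * ‖gradh xs‖) := by
    intro k
    have hxfk : xf k = proxf ((2:ℝ) • PV (z k - γ • gradh (z k)) - (z k - γ • gradh (z k))) :=
      hxf k
    have h1 : ⟪xs - xf k, ((2:ℝ) • PV (z k - γ • gradh (z k)) - (z k - γ • gradh (z k))) - xf k⟫
        ≤ γ * (f xs - f (xf k)) := by
      conv_lhs => rw [hxfk]
      conv_rhs => rw [hxfk]
      exact hpsub _ xs
    have h2 : h (xh k) + ⟪gradh (xh k), xs - xh k⟫ ≤ h xs :=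
      conv_grad_ineq h gradh hhconv hhdiff (xh k) xs
    have hghxh : gradh (xh k) = gradh (z k) := by rw [hxh]; exact hgradhPz _
    rw [hghxh] at h2
    -- vector identities
    have hv1 : xs - xf k = -((xf k - xh k) + (xh k - xs)) := by abel
    have hv2 : ((2:ℝ) • PV (z k - γ • gradh (z k)) - (z k - γ • gradh (z k))) - xf k
        = -(xf k - xh k) - (zs - xs) - (z k - zs) + (xh k - xs) - γ • gradh (z k) := by
      have hPw : PV (z k - γ • gradh (z k)) = PV (z k) - γ • gradh (z k) := by
        rw [hPsub, hPsmul, hPgradh]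
      rw [hPw, hxh, hxs]
      module
    have hmV : xh k - xs ∈ V := by
      rw [hxh, hxs, ← hPsub]; exact hPmemV _
    have hme : ⟪xh k - xs, (zs - xs) + (z k - zs) - (xh k - xs)⟫ = 0 := by
      have hedec : (zs - xs) + (z k - zs) - (xh k - xs) = z k - PV (z k) := by
        rw [hxh, hxs]; abel
      rw [hedec, real_inner_comm]
      exact horth (z k) _ hmV
    have hgg : ‖gradh (z k) - gradh xs‖ ≤ 1 / βV * D := by
      have hgsz : gradh xs = gradh zs := by rw [hxs, hgradhPz]
      rw [hgsz]
      calc ‖gradh (z k) - gradh zs‖ ≤ 1 / βV * ‖z k - zs‖ := hliph _ _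
      _ ≤ 1 / βV * D := mul_le_mul_of_nonneg_left (hfejer k) hβVi
    have key := gap_upper_alg (xf k - xh k) (xh k - xs) (zs - xs) (z k - zs)
      (gradh (z k)) (gradh xs) γ D (1 / βV) hγ0 hme (hfejer k) hgg
    -- chain: γ * gap ≤ ⟪xf−xs, R−xf⟫ + γ⟪g1, m⟫ = key LHS
    have hin1 : ⟪xs - xf k, ((2:ℝ) • PV (z k - γ • gradh (z k)) - (z k - γ • gradh (z k))) - xf k⟫
        = -⟪(xf k - xh k) + (xh k - xs),
            -(xf k - xh k) - (zs - xs) - (z k - zs) + (xh k - xs) - γ • gradh (z k)⟫ := by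
      rw [hv1, hv2, inner_neg_left]
    have hin2 : ⟪gradh (z k), xs - xh k⟫ = -⟪gradh (z k), xh k - xs⟫ := by
      rw [show xs - xh k = -(xh k - xs) by abel, inner_neg_right]
    rw [hin1] at h1
    rw [hin2] at h2
    have h2γ : γ * (h (xh k) - h xs) ≤ γ * ⟪gradh (z k), xh k - xs⟫ := by
      have h3 : h (xh k) - h xs ≤ ⟪gradh (z k), xh k - xs⟫ := by linarith
      exact mul_le_mul_of_nonneg_left h3 hγ0.le
    have hCeq : ‖xf k - xh k‖ * (‖zs - xs‖ + D + γ * (1 / βV * D) + γ * ‖gradh xs‖)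
        = ‖xf k - xh k‖ * (‖zs - xs‖ + (1 + γ / βV) * D + γ * ‖gradh xs‖) := by
      ring
    rw [hCeq] at key
    linarith [h1, h2γ, key]
  -- (ii) lower
  have hiilow : ∀ k : ℕ, -(D * ‖p‖ / Real.sqrt (τ * ((k:ℝ) + 1)))
      ≤ f (xf k) + h (xh k) - f xs - h xs := by
    intro k
    have h1 := hgaplow k
    have h2 : -(‖xf k - xh k‖ * ‖p‖) ≤ ⟪xf k - xh k, p⟫ := by
      have h3 := real_inner_le_norm (-(xf k - xh k)) p
      rw [inner_neg_left, norm_neg] at h3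
      linarith
    have h4 : ‖xf k - xh k‖ * ‖p‖ ≤ D / Real.sqrt (τ * ((k:ℝ) + 1)) * ‖p‖ :=
      mul_le_mul_of_nonneg_right (hnormuk k) (norm_nonneg p)
    have h5 : D / Real.sqrt (τ * ((k:ℝ) + 1)) * ‖p‖ = D * ‖p‖ / Real.sqrt (τ * ((k:ℝ) + 1)) := by
      ring
    linarith
  -- (ii) upper
  have hiiup : ∀ k : ℕ, f (xf k) + h (xh k) - f xs - h xs
      ≤ (‖zs - xs‖ + (1 + γ / βV) * D + γ * ‖gradh xs‖) * D / (γ * Real.sqrt (τ * ((k:ℝ) + 1))) := by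
    intro k
    have h1 := hgapup k
    have hsq : (0:ℝ) < Real.sqrt (τ * ((k:ℝ) + 1)) := Real.sqrt_pos.2 (by positivity)
    have h2 : ‖xf k - xh k‖ * (‖zs - xs‖ + (1 + γ / βV) * D + γ * ‖gradh xs‖)
        ≤ (D / Real.sqrt (τ * ((k:ℝ) + 1))) * (‖zs - xs‖ + (1 + γ / βV) * D + γ * ‖gradh xs‖) :=
      mul_le_mul_of_nonneg_right (hnormuk k) hCnn
    have h3 : γ * (f (xf k) + h (xh k) - f xs - h xs)
        ≤ (D / Real.sqrt (τ * ((k:ℝ) + 1))) * (‖zs - xs‖ + (1 + γ / βV) * D + γ * ‖gradh xs‖) :=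
      le_trans h1 h2
    rw [div_mul_eq_mul_div] at h3
    have hfin : (‖zs - xs‖ + (1 + γ / βV) * D + γ * ‖gradh xs‖) * D
        / (γ * Real.sqrt (τ * ((k:ℝ) + 1)))
        - (f (xf k) + h (xh k) - f xs - h xs)
        = (D * (‖zs - xs‖ + (1 + γ / βV) * D + γ * ‖gradh xs‖)
            - γ * (f (xf k) + h (xh k) - f xs - h xs) * Real.sqrt (τ * ((k:ℝ) + 1)))
          / (γ * Real.sqrt (τ * ((k:ℝ) + 1))) := by
      field_simp
    rw [← sub_nonneg, hfin]
    apply div_nonneg _ (by positivity)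
    have h4 : γ * (f (xf k) + h (xh k) - f xs - h xs) * Real.sqrt (τ * ((k:ℝ) + 1))
        ≤ D * (‖zs - xs‖ + (1 + γ / βV) * D + γ * ‖gradh xs‖) := by
      have h5 : γ * (f (xf k) + h (xh k) - f xs - h xs) * Real.sqrt (τ * ((k:ℝ) + 1))
          ≤ (D * (‖zs - xs‖ + (1 + γ / βV) * D + γ * ‖gradh xs‖)
              / Real.sqrt (τ * ((k:ℝ) + 1))) * Real.sqrt (τ * ((k:ℝ) + 1)) := by
        apply mul_le_mul_of_nonneg_right _ hsq.le
        linarith [h3]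
      rwa [div_mul_cancel₀ _ (ne_of_gt hsq)] at h5
    linarith
  -- (iii)
  have hiii : (fun k : ℕ => |f (xf k) + h (xh k) - f xs - h xs|)
      =o[atTop] fun k : ℕ => 1 / Real.sqrt ((k:ℝ) + 1) := by
    set M : ℝ := max ‖p‖ ((‖zs - xs‖ + (1 + γ / βV) * D + γ * ‖gradh xs‖) / γ) with hM
    have hMp : ‖p‖ ≤ M := le_max_left _ _
    have hMc : (‖zs - xs‖ + (1 + γ / βV) * D + γ * ‖gradh xs‖) / γ ≤ M := le_max_right _ _
    have habs : ∀ k : ℕ, |f (xf k) + h (xh k) - f xs - h xs| ≤ M * ‖xf k - xh k‖ := by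
      intro k
      have hun : (0:ℝ) ≤ ‖xf k - xh k‖ := norm_nonneg _
      rw [abs_le]
      constructor
      · have h1 := hgaplow k
        have h2 : -(‖xf k - xh k‖ * ‖p‖) ≤ ⟪xf k - xh k, p⟫ := by
          have h3 := real_inner_le_norm (-(xf k - xh k)) p
          rw [inner_neg_left, norm_neg] at h3
          linarith
        have h4 : ‖xf k - xh k‖ * ‖p‖ ≤ ‖xf k - xh k‖ * M :=
          mul_le_mul_of_nonneg_left hMp hun
        have h5 : ‖xf k - xh k‖ * M = M * ‖xf k - xh k‖ := by ring
        linarith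
      · have h1 := hgapup k
        have h2 : f (xf k) + h (xh k) - f xs - h xs
            ≤ ‖xf k - xh k‖ * ((‖zs - xs‖ + (1 + γ / βV) * D + γ * ‖gradh xs‖) / γ) := by
          rw [mul_div_assoc'] at *
          rw [le_div_iff₀ hγ0]
          calc (f (xf k) + h (xh k) - f xs - h xs) * γ
              = γ * (f (xf k) + h (xh k) - f xs - h xs) := by ring
          _ ≤ ‖xf k - xh k‖ * (‖zs - xs‖ + (1 + γ / βV) * D + γ * ‖gradh xs‖) := h1
        calc f (xf k) + h (xh k) - f xs - h xs
            ≤ ‖xf k - xh k‖ * ((‖zs - xs‖ + (1 + γ / βV) * D + γ * ‖gradh xs‖) / γ) := h2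
        _ ≤ ‖xf k - xh k‖ * M := mul_le_mul_of_nonneg_left hMc hun
        _ = M * ‖xf k - xh k‖ := by ring
    have hbigO : (fun k : ℕ => |f (xf k) + h (xh k) - f xs - h xs|)
        =O[atTop] fun k : ℕ => ‖xf k - xh k‖ := by
      rw [isBigO_iff]
      refine ⟨M, Eventually.of_forall fun k => ?_⟩
      rw [Real.norm_eq_abs, Real.norm_eq_abs, abs_abs, abs_of_nonneg (norm_nonneg _)]
      exact habs k
    exact hbigO.trans_isLittleO hlittleo
  exact ⟨hnormuk, hlittleo, fun k => ⟨hiilow k, hiiup k⟩, hiii⟩
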